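/- Let R be an Erdős sieve over an étale ℚ-algebra K with weak light tails for a Følner sequence (I_N). Suppose that for every finite set A ⊆ ℕ and every choice of elements x_i ∈ O_K for i ∈ A, the sieve R' defined by R'_i := x_i + R_i for i ∈ A and R'_i := R_i for i ∉ A also has weak light tails for (I_N). Then R has strong light tails for (I_N). -/

import Mathlib

open Filter Topology MeasureTheory Pointwise symmDiff

noncomputable section

namespace ErdosSieve

variable {O : Type} [CommRing O]

/-- A sieve over (the ring of integers of) an étale `ℚ`-algebra: a sequence of pairwise
coprime invertible (i.e. finite-quotient) ideals `b i` together with, for each `i`, a finite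
set `gen i` of representatives, so that the sieved-out set is `R_i = gen i + b i`, which is
required to be a proper subset of the ring. -/
structure Sieve (O : Type) [CommRing O] : Type where
  b : ℕ → Ideal O
  gen : ℕ → Finset O
  coprime : ∀ i j, i ≠ j → b i ⊔ b j = ⊤
  finQuot : ∀ i, Finite (O ⧸ b i)
  ne_univ : ∀ i, (↑(gen i) : Set O) + (↑(b i) : Set O) ≠ Set.univ

/-- The `i`-th sieved-out set `R_i = gen i + b i`. -/
def Sieve.RSet (S : Sieve O) (i : ℕ) : Set O := (↑(S.gen i) : Set O) + (↑(S.b i) : Set O)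

/-- The set `F_R` of `R`-free numbers. -/
def Sieve.FR (S : Sieve O) : Set O := (⋃ i, S.RSet i)ᶜ

/-- The norm `N(b i)` of the `i`-th ideal. -/
def Sieve.normb (S : Sieve O) (i : ℕ) : ℕ := Nat.card (O ⧸ S.b i)

/-- The number `|R_i|` of residue classes modulo `b i` met by `R_i`. -/
def Sieve.cardR (S : Sieve O) (i : ℕ) : ℕ :=
  Nat.card ((Ideal.Quotient.mk (S.b i)) '' (S.RSet i))

/-- A sieve is Erdős if `∑ |R_i| / N(b_i) < ∞`. -/
def Sieve.IsErdos (S : Sieve O) : Prop :=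
  Summable fun i => (S.cardR i : ℝ) / (S.normb i : ℝ)

/-- A Følner sequence: finite nonempty subsets of `O` which are asymptotically
translation-invariant. -/
def IsFolner (I : ℕ → Set O) : Prop :=
  (∀ N, (I N).Finite) ∧ (∀ N, (I N).Nonempty) ∧
    ∀ x : O, Tendsto
      (fun N => (Nat.card ↥(((x + ·) '' I N) ∆ (I N)) : ℝ) / (Nat.card ↥(I N) : ℝ))
      atTop (𝓝 0)

/-- Upper density along a (Følner) sequence. -/
def upperDensity (I : ℕ → Set O) (A : Set O) : ℝ :=
  limsup (fun N => (Nat.card ↥(A ∩ I N) : ℝ) / (Nat.card ↥(I N) : ℝ)) atTop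

/-- `A` has density `d` along the sequence `I`. -/
def HasDensity (I : ℕ → Set O) (A : Set O) (d : ℝ) : Prop :=
  Tendsto (fun N => (Nat.card ↥(A ∩ I N) : ℝ) / (Nat.card ↥(I N) : ℝ)) atTop (𝓝 d)

/-- `⋃_{i ≥ L} R i`. -/
def unionGe (R : ℕ → Set O) (L : ℕ) : Set O := ⋃ i, ⋃ (_ : L ≤ i), R i

/-- `⋃_{i < L} R i`. -/
def unionLt (R : ℕ → Set O) (L : ℕ) : Set O := ⋃ i, ⋃ (_ : i < L), R i

/-- The weak light tails property for a family of sieved-out sets: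
`limsup`-density of `⋃_{i ≥ L} R_i ∖ ⋃_{j < L} R_j` tends to `0` as `L → ∞`. -/
def WeakLightTailsFam (I : ℕ → Set O) (R : ℕ → Set O) : Prop :=
  Tendsto (fun L => upperDensity I (unionGe R L \ unionLt R L)) atTop (𝓝 0)

/-- The strong light tails property for a family of sieved-out sets. -/
def StrongLightTailsFam (I : ℕ → Set O) (R : ℕ → Set O) : Prop :=
  Tendsto (fun L => upperDensity I (unionGe R L)) atTop (𝓝 0)

/-- A sieve has weak light tails for `I` if it is Erdős and the tail differences have
vanishing upper density. -/
def Sieve.HasWeakLightTails (S : Sieve O) (I : ℕ → Set O) : Prop :=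
  S.IsErdos ∧ WeakLightTailsFam I S.RSet

/-- A sieve has strong light tails for `I` if it is Erdős and the tails have vanishing
upper density. -/
def Sieve.HasStrongLightTails (S : Sieve O) (I : ℕ → Set O) : Prop :=
  S.IsErdos ∧ StrongLightTailsFam I S.RSet

/-- The infinite product `∏_i (1 - |R_i|/N(b_i))`, realized as the infimum of the
(nonincreasing) sequence of partial products, i.e. as its limit. -/
def Sieve.prodDensity (S : Sieve O) : ℝ :=
  ⨅ L : ℕ, ∏ i ∈ Finset.range L, (1 - (S.cardR i : ℝ) / (S.normb i : ℝ))

/-- `A` is an `R`-admissible set: `-A + R_i ≠ O` for all `i`. -/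
def Sieve.Admissible (S : Sieve O) (A : Set O) : Prop :=
  ∀ i, -A + S.RSet i ≠ Set.univ

/-- The number `|-A + R_i|` of residue classes modulo `b i` met by `-A + R_i`. -/
def Sieve.cardShift (S : Sieve O) (A : Set O) (i : ℕ) : ℕ :=
  Nat.card ((Ideal.Quotient.mk (S.b i)) '' (-A + S.RSet i))

/-- The infinite product `∏_i (1 - |-A + R_i|/N(b_i))` (as the infimum of the
partial products). -/
def Sieve.prodDensityShift (S : Sieve O) (A : Set O) : ℝ :=
  ⨅ L : ℕ, ∏ i ∈ Finset.range L, (1 - (S.cardShift A i : ℝ) / (S.normb i : ℝ))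

/-- A subset `Y` of `O` is syndetic if finitely many translates of it cover `O`. -/
def Syndetic (Y : Set O) : Prop := ∃ C : Finset O, Y + (↑C : Set O) = Set.univ

-- Indicator of a subset of `O`, i.e. a point of the shift space `{0,1}^O`.
open Classical in
def chiSet (A : Set O) : O → Bool := fun x => if x ∈ A then true else false

/-- The shift action `S_a(A) = A - a` on `{0,1}^O`: `χ_{A - a}(x) = χ_A (x + a)`. -/
def shiftB (a : O) (f : O → Bool) : O → Bool := fun x => f (x + a)

/-- The odometer group `G_R = ∏ i, O ⧸ b i`. -/
abbrev Sieve.GR (S : Sieve O) : Type := ∀ i : ℕ, O ⧸ S.b i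

-- The map `φ_R : G_R → {0,1}^O`: `a ∈ φ_R(g)` iff `a + g i` avoids (the image of) `R_i`
-- modulo `b i` for every `i`.
open Classical in
def Sieve.phiB (S : Sieve O) (g : S.GR) : O → Bool := fun a =>
  if (∀ i, (Ideal.Quotient.mk (S.b i) a + g i) ∉ (Ideal.Quotient.mk (S.b i)) '' (S.RSet i))
  then true else false

/-- The Mirsky measure `ν_R` on `{0,1}^O`: the pushforward under `φ_R` of the Haar
probability measure of the compact group `G_R` (each factor being finite and discrete,
and the Haar measure being normalized so that the whole group has measure `1`). -/
def Sieve.mirsky (S : Sieve O) : Measure (O → Bool) := by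
  letI : ∀ i, TopologicalSpace (O ⧸ S.b i) := fun _ => ⊥
  haveI : ∀ i, DiscreteTopology (O ⧸ S.b i) := fun _ => ⟨rfl⟩
  haveI : ∀ i, Finite (O ⧸ S.b i) := S.finQuot
  haveI : ∀ i, IsTopologicalAddGroup (O ⧸ S.b i) := fun i => { }
  letI : MeasurableSpace S.GR := borel _
  haveI : BorelSpace S.GR := ⟨rfl⟩
  exact Measure.map S.phiB (Measure.addHaarMeasure (G := S.GR) ⊤)

/-- The ring of integers of the étale `ℚ`-algebra `K 0 × ⋯ × K (m-1)`. -/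
abbrev OK {m : ℕ} (K : Fin m → Type) [∀ j, Field (K j)] [∀ j, NumberField (K j)] : Type :=
  ∀ j, NumberField.RingOfIntegers (K j)


section AuxDensity

set_option linter.unusedSectionVars false in
lemma ratio_nonneg {I : ℕ → Set O} (A : Set O) (N : ℕ) :
    0 ≤ (Nat.card ↥(A ∩ I N) : ℝ) / (Nat.card ↥(I N) : ℝ) := by positivity

variable {I : ℕ → Set O} (hI : IsFolner I)
include hI

lemma cardI_pos (N : ℕ) : 0 < (Nat.card ↥(I N) : ℝ) := by
  have := (hI.1 N).to_subtype
  have := (hI.2.1 N).to_subtype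
  exact_mod_cast Nat.card_pos

lemma card_inter_le (A : Set O) (N : ℕ) : Nat.card ↥(A ∩ I N) ≤ Nat.card ↥(I N) := by
  rw [Nat.card_coe_set_eq, Nat.card_coe_set_eq]
  exact Set.ncard_le_ncard Set.inter_subset_right (hI.1 N)

lemma ratio_le_one (A : Set O) (N : ℕ) :
    (Nat.card ↥(A ∩ I N) : ℝ) / (Nat.card ↥(I N) : ℝ) ≤ 1 := by
  rw [div_le_one (cardI_pos hI N)]
  exact_mod_cast card_inter_le hI A N

lemma ratio_bddAbove (A : Set O) :
    IsBoundedUnder (· ≤ ·) atTop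
      (fun N => (Nat.card ↥(A ∩ I N) : ℝ) / (Nat.card ↥(I N) : ℝ)) :=
  isBoundedUnder_of ⟨1, fun N => ratio_le_one hI A N⟩

lemma ratio_bddBelow (A : Set O) :
    IsBoundedUnder (· ≥ ·) atTop
      (fun N => (Nat.card ↥(A ∩ I N) : ℝ) / (Nat.card ↥(I N) : ℝ)) :=
  isBoundedUnder_of ⟨0, fun N => ratio_nonneg A N⟩

lemma upperDensity_nonneg (A : Set O) : 0 ≤ upperDensity I A :=
  le_limsup_of_frequently_le (Filter.Frequently.of_forall fun N => ratio_nonneg A N)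
    (ratio_bddAbove hI A)

lemma upperDensity_mono {A B : Set O} (h : A ⊆ B) : upperDensity I A ≤ upperDensity I B := by
  refine limsup_le_limsup (Filter.Eventually.of_forall fun N => ?_)
    ((ratio_bddBelow hI A).isCoboundedUnder_le) (ratio_bddAbove hI B)
  apply div_le_div_of_nonneg_right ?_ (cardI_pos hI N).le |>.trans_eq rfl
  rw [Nat.card_coe_set_eq, Nat.card_coe_set_eq]
  exact_mod_cast Set.ncard_le_ncard (Set.inter_subset_inter_left _ h) ((hI.1 N).inter_of_right _)

lemma upperDensity_union_le (A B : Set O) :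
    upperDensity I (A ∪ B) ≤ upperDensity I A + upperDensity I B := by
  have hpt : ∀ N, (Nat.card ↥((A ∪ B) ∩ I N) : ℝ) / (Nat.card ↥(I N) : ℝ) ≤
      (Nat.card ↥(A ∩ I N) : ℝ) / (Nat.card ↥(I N) : ℝ) +
      (Nat.card ↥(B ∩ I N) : ℝ) / (Nat.card ↥(I N) : ℝ) := by
    intro N
    rw [← add_div]
    apply div_le_div_of_nonneg_right ?_ (cardI_pos hI N).le
    rw [Nat.card_coe_set_eq, Nat.card_coe_set_eq, Nat.card_coe_set_eq]
    rw [Set.union_inter_distrib_right]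
    exact_mod_cast Set.ncard_union_le _ _
  calc upperDensity I (A ∪ B) ≤ limsup (fun N =>
        (Nat.card ↥(A ∩ I N) : ℝ) / (Nat.card ↥(I N) : ℝ) +
        (Nat.card ↥(B ∩ I N) : ℝ) / (Nat.card ↥(I N) : ℝ)) atTop := by
        refine limsup_le_limsup (Filter.Eventually.of_forall hpt)
          ((ratio_bddBelow hI _).isCoboundedUnder_le) ?_
        exact isBoundedUnder_of ⟨2, fun N =>
          (add_le_add (ratio_le_one hI A N) (ratio_le_one hI B N)).trans_eq one_add_one_eq_two⟩
    _ ≤ upperDensity I A + upperDensity I B :=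
        limsup_add_le (ratio_bddBelow hI A) (ratio_bddAbove hI A)
          ((ratio_bddBelow hI B).isCoboundedUnder_le) (ratio_bddAbove hI B)

lemma upperDensity_biUnion_le {ι : Type} (s : Finset ι) (A : ι → Set O) :
    upperDensity I (⋃ j ∈ s, A j) ≤ ∑ j ∈ s, upperDensity I (A j) := by
  classical
  induction s using Finset.induction with
  | empty =>
      simp only [Finset.notMem_empty, Set.iUnion_of_empty, Set.iUnion_empty, Finset.sum_empty]
      have h0 : ∀ N : ℕ, (Nat.card ↥((∅ : Set O) ∩ I N) : ℝ) / (Nat.card ↥(I N) : ℝ) = 0 := by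
        intro N; simp
      simp only [upperDensity, h0]
      simpa using Filter.limsup_const (0 : ℝ)
  | @insert a s ha ih =>
      rw [Finset.set_biUnion_insert, Finset.sum_insert ha]
      exact (upperDensity_union_le hI _ _).trans (by gcongr)

lemma upperDensity_preimage_le (b : Ideal O) (hfin : Finite (O ⧸ b)) (Q : Set (O ⧸ b)) :
    upperDensity I ((Ideal.Quotient.mk b) ⁻¹' Q) ≤ (Nat.card Q : ℝ) / (Nat.card (O ⧸ b) : ℝ) := by
  classical
  haveI := hfin
  letI : Fintype (O ⧸ b) := Fintype.ofFinite _
  set π := Ideal.Quotient.mk b with hπ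
  choose sec hsecspec using (Ideal.Quotient.mk_surjective (I := b))
  set k := Fintype.card (O ⧸ b) with hk
  have hk0 : 0 < k := Fintype.card_pos
  set n : (O ⧸ b) → ℕ → ℕ := fun q N => ((π ⁻¹' {q}) ∩ I N).ncard with hn
  set e : O → ℕ → ℕ := fun x N => Nat.card ↥(((x + ·) '' I N) ∆ (I N)) with he
  set E : ℕ → ℕ := fun N => ∑ d : O ⧸ b, e (sec d) N with hE
  have hsum : ∀ N, ∑ q : O ⧸ b, n q N = (I N).ncard := by
    intro N
    have hT := hI.1 N
    rw [Set.ncard_eq_toFinset_card _ hT,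
      Finset.card_eq_sum_card_fiberwise (f := π) (t := Finset.univ) (fun x _ => Finset.mem_univ _)]
    refine (Finset.sum_congr rfl fun q _ => ?_).symm
    have h4 : (π ⁻¹' {q}) ∩ I N = ↑(hT.toFinset.filter fun y => π y = q) := by
      ext y
      simp only [Set.mem_inter_iff, Set.mem_preimage, Set.mem_singleton_iff, Finset.coe_filter,
        Set.Finite.mem_toFinset, Set.mem_setOf_eq]
      tauto
    show (hT.toFinset.filter fun y => π y = q).card = (π ⁻¹' {q} ∩ I N).ncard
    rw [h4, Set.ncard_coe_finset]
  have htrans : ∀ (q q' : O ⧸ b) (N : ℕ), n q N ≤ n q' N + e (sec (q' - q)) N := by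
    intro q q' N
    set x := sec (q' - q) with hxdef
    have hx : π x = q' - q := hsecspec _
    have hdfin : ((((x + ·) '' I N) ∆ (I N)) : Set O).Finite :=
      Set.Finite.subset (Set.Finite.union ((hI.1 N).image _) (hI.1 N))
        (symmDiff_le_sup : _ ∆ _ ≤ _ ⊔ _)
    have hmaps : ∀ y ∈ (π ⁻¹' {q}) ∩ I N,
        y + x ∈ ((π ⁻¹' {q'}) ∩ I N) ∪ (((x + ·) '' I N) ∆ (I N)) := by
      intro y hy
      have hyq : π y = q := hy.1
      have hπyx : π (y + x) = q' := by rw [map_add, hyq, hx]; abel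
      by_cases hmem : y + x ∈ I N
      · exact Or.inl ⟨hπyx, hmem⟩
      · refine Or.inr (Set.mem_symmDiff.2 (Or.inl ⟨⟨y, hy.2, add_comm x y⟩, hmem⟩))
    have hinj : Set.InjOn (· + x) ((π ⁻¹' {q}) ∩ I N) := fun a _ c _ h => add_right_cancel h
    calc n q N ≤ (((π ⁻¹' {q'}) ∩ I N) ∪ (((x + ·) '' I N) ∆ (I N))).ncard :=
          Set.ncard_le_ncard_of_injOn _ hmaps hinj
            (Set.Finite.union ((hI.1 N).inter_of_right _) hdfin)
      _ ≤ n q' N + e (sec (q' - q)) N := by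
          refine (Set.ncard_union_le _ _).trans ?_
          have : e (sec (q' - q)) N = (((x + ·) '' I N) ∆ (I N)).ncard := by
            rw [he]; exact Nat.card_coe_set_eq _
          rw [this]
  have hbound : ∀ (q : O ⧸ b) (N : ℕ), k * n q N ≤ (I N).ncard + E N := by
    intro q N
    have h1 : k * n q N = ∑ _q' : O ⧸ b, n q N := by
      rw [Finset.sum_const, Finset.card_univ, smul_eq_mul]
    have h2 : ∑ q' : O ⧸ b, n q N ≤ ∑ q' : O ⧸ b, (n q' N + e (sec (q' - q)) N) :=
      Finset.sum_le_sum fun q' _ => htrans q q' N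
    have h3 : ∑ q' : O ⧸ b, (n q' N + e (sec (q' - q)) N) = (I N).ncard + E N := by
      rw [Finset.sum_add_distrib, hsum]
      congr 1
      exact Fintype.sum_equiv (Equiv.subRight q) _ _ (fun q' => rfl)
    rw [h1]; exact h2.trans h3.le
  have hQfin : Q.Finite := Q.toFinite
  have hQcount : ∀ N, ((π ⁻¹' Q) ∩ I N).ncard ≤ ∑ q ∈ hQfin.toFinset, n q N := by
    intro N
    have hsub : (π ⁻¹' Q) ∩ I N ⊆ ⋃ q ∈ hQfin.toFinset, ((π ⁻¹' {q}) ∩ I N) := fun y hy =>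
      Set.mem_biUnion (hQfin.mem_toFinset.2 hy.1) ⟨rfl, hy.2⟩
    refine (Set.ncard_le_ncard hsub ?_).trans ?_
    · exact Set.Finite.biUnion (hQfin.toFinset.finite_toSet) fun q _ => (hI.1 N).inter_of_right _
    · classical
      induction hQfin.toFinset using Finset.induction with
      | empty => simp
      | @insert a s ha ih =>
          rw [Finset.set_biUnion_insert, Finset.sum_insert ha]
          exact (Set.ncard_union_le _ _).trans (by gcongr)
  have ha_pos : ∀ N, 0 < (Nat.card ↥(I N) : ℝ) := fun N => cardI_pos hI N
  have hratio : ∀ N, (Nat.card ↥((π ⁻¹' Q) ∩ I N) : ℝ) / (Nat.card ↥(I N) : ℝ) ≤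
      (hQfin.toFinset.card : ℝ) / k * (1 + (E N : ℝ) / (Nat.card ↥(I N) : ℝ)) := by
    intro N
    have haN : (Nat.card ↥(I N) : ℝ) ≠ 0 := (ha_pos N).ne'
    have hIcast : ((I N).ncard : ℝ) = (Nat.card ↥(I N) : ℝ) := by
      rw [Nat.card_coe_set_eq]
    have h1 : (Nat.card ↥((π ⁻¹' Q) ∩ I N) : ℝ) ≤ ∑ q ∈ hQfin.toFinset, (n q N : ℝ) := by
      rw [Nat.card_coe_set_eq]
      exact_mod_cast hQcount N
    have h2 : ∀ q, (n q N : ℝ) ≤ ((Nat.card ↥(I N) : ℝ) + E N) / k := by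
      intro q
      rw [le_div_iff₀ (by exact_mod_cast hk0), mul_comm]
      calc (k : ℝ) * n q N = ((k * n q N : ℕ) : ℝ) := by push_cast; ring
        _ ≤ (((I N).ncard + E N : ℕ) : ℝ) := by exact_mod_cast hbound q N
        _ = (Nat.card ↥(I N) : ℝ) + E N := by push_cast; rw [hIcast]
    have h3 : (Nat.card ↥((π ⁻¹' Q) ∩ I N) : ℝ) ≤
        (hQfin.toFinset.card : ℝ) * (((Nat.card ↥(I N) : ℝ) + E N) / k) := by
      refine h1.trans ?_
      calc ∑ q ∈ hQfin.toFinset, (n q N : ℝ)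
          ≤ ∑ _q ∈ hQfin.toFinset, ((Nat.card ↥(I N) : ℝ) + E N) / k :=
            Finset.sum_le_sum fun q _ => h2 q
        _ = (hQfin.toFinset.card : ℝ) * (((Nat.card ↥(I N) : ℝ) + E N) / k) := by
            rw [Finset.sum_const, nsmul_eq_mul]
    rw [div_le_iff₀ (ha_pos N)]
    refine h3.trans_eq ?_
    field_simp
  have hE0 : Tendsto (fun N => (E N : ℝ) / (Nat.card ↥(I N) : ℝ)) atTop (𝓝 0) := by
    have heq : (fun N => (E N : ℝ) / (Nat.card ↥(I N) : ℝ)) =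
        fun N => ∑ d : O ⧸ b, ((e (sec d) N : ℝ) / (Nat.card ↥(I N) : ℝ)) := by
      funext N
      rw [hE]; push_cast; rw [Finset.sum_div]
    rw [heq]
    have h := tendsto_finset_sum (Finset.univ : Finset (O ⧸ b))
      (fun d (_ : d ∈ Finset.univ) => hI.2.2 (sec d))
    rw [Finset.sum_const, smul_zero] at h
    exact h
  have hgl : Tendsto
      (fun N => (hQfin.toFinset.card : ℝ) / k * (1 + (E N : ℝ) / (Nat.card ↥(I N) : ℝ)))
      atTop (𝓝 ((hQfin.toFinset.card : ℝ) / k)) := by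
    have h1 : Tendsto (fun N => 1 + (E N : ℝ) / (Nat.card ↥(I N) : ℝ)) atTop (𝓝 1) := by
      simpa using tendsto_const_nhds.add hE0
    simpa using (h1.const_mul ((hQfin.toFinset.card : ℝ) / k))
  have hfinal : upperDensity I ((π) ⁻¹' Q) ≤ (hQfin.toFinset.card : ℝ) / k := by
    rw [upperDensity]
    calc limsup (fun N => (Nat.card ↥((π ⁻¹' Q) ∩ I N) : ℝ) / (Nat.card ↥(I N) : ℝ)) atTop
        ≤ limsup (fun N =>
            (hQfin.toFinset.card : ℝ) / k * (1 + (E N : ℝ) / (Nat.card ↥(I N) : ℝ))) atTop :=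
          limsup_le_limsup (Filter.Eventually.of_forall hratio)
            ((ratio_bddBelow hI _).isCoboundedUnder_le) hgl.isBoundedUnder_le
      _ = (hQfin.toFinset.card : ℝ) / k := hgl.limsup_eq
  refine hfinal.trans_eq ?_
  congr 1
  · rw [← Set.ncard_eq_toFinset_card _ hQfin, Nat.card_coe_set_eq]
  · rw [hk, Nat.card_eq_fintype_card]

end AuxDensity

section AuxSieve

lemma Sieve.add_mem_RSet (S : Sieve O) (i : ℕ) {y : O} (hy : y ∈ S.RSet i) {v : O}
    (hv : v ∈ S.b i) : y + v ∈ S.RSet i := by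
  obtain ⟨g, hg, w, hw, rfl⟩ := hy
  exact ⟨g, hg, w + v, (S.b i).add_mem hw hv, (add_assoc g w v).symm⟩

lemma Sieve.mem_RSet_of_mk_eq (S : Sieve O) (i : ℕ) {y r : O} (hr : r ∈ S.RSet i)
    (h : Ideal.Quotient.mk (S.b i) r = Ideal.Quotient.mk (S.b i) y) : y ∈ S.RSet i := by
  have hsub : y - r ∈ S.b i := by
    have := Ideal.Quotient.eq.mp h.symm
    exact this
  have := S.add_mem_RSet i hr hsub
  simpa using this

lemma Sieve.RSet_eq_preimage (S : Sieve O) (i : ℕ) :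
    S.RSet i = (Ideal.Quotient.mk (S.b i)) ⁻¹' ((Ideal.Quotient.mk (S.b i)) '' (S.RSet i)) := by
  ext y
  constructor
  · exact fun h => Set.mem_image_of_mem _ h
  · rintro ⟨r, hr, heq⟩
    exact S.mem_RSet_of_mk_eq i hr heq

lemma Sieve.image_RSet_ne_univ (S : Sieve O) (i : ℕ) :
    (Ideal.Quotient.mk (S.b i)) '' (S.RSet i) ≠ Set.univ := by
  intro h
  apply S.ne_univ i
  have hR : S.RSet i = (↑(S.gen i) : Set O) + (↑(S.b i) : Set O) := rfl
  rw [← hR, S.RSet_eq_preimage i, h, Set.preimage_univ]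

end AuxSieve

variable {m : ℕ} (K : Fin m → Type) [∀ j, Field (K j)] [∀ j, NumberField (K j)]

/-- The "ball" `B_N` in `O_K`: elements all of whose archimedean embeddings have absolute
value at most `N` (the max over embeddings of all the number-field components). -/
def ball (N : ℕ) : Set (OK K) :=
  {x | ∀ j, ∀ φ : K j →+* ℂ,
    ‖φ (algebraMap (NumberField.RingOfIntegers (K j)) (K j) (x j))‖ ≤ N}

set_option maxHeartbeats 4000000 in
set_option synthInstance.maxHeartbeats 1000000 in
/-- **Strong light tails from translation-stable weak light tails.** If `R` is an Erdős
sieve with weak light tails for `I`, and every sieve obtained from `R` by translating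
finitely many of the sets `R_i` still has weak light tails for `I`, then `R` has strong
light tails for `I`. -/
theorem strong_light_tails_of_translation_stability
    {m : ℕ} (hm : 0 < m) (K : Fin m → Type) [∀ j, Field (K j)]
    [∀ j, NumberField (K j)]
    (S : Sieve (OK K)) (I : ℕ → Set (OK K)) (hI : IsFolner I)
    (hWLT : S.HasWeakLightTails I)
    (htrans : ∀ A : Finset ℕ, ∀ x : ℕ → OK K,
      (Summable fun i => ((Nat.card ↥((Ideal.Quotient.mk (S.b i)) ''
            (if i ∈ A then (x i + ·) '' S.RSet i else S.RSet i)) : ℝ)) / (S.normb i : ℝ))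
      ∧ WeakLightTailsFam I
          (fun i => if i ∈ A then (x i + ·) '' S.RSet i else S.RSet i)) :
    S.HasStrongLightTails I := by
  classical
  refine ⟨hWLT.1, ?_⟩
  have key : ∀ δ : ℝ, 0 < δ → ∃ L₀ : ℕ, ∀ L ≥ L₀,
      upperDensity I (unionGe S.RSet L) ≤ δ := by
    intro δ hδ
    -- choose `M` so that the tail of the Erdős series beyond `M` is small
    obtain ⟨s, hs⟩ := hWLT.1.vanishing (Iio_mem_nhds (by linarith : (0:ℝ) < δ/2))
    set M := s.sup id + 1 with hMdef
    have htail : ∀ L, ∑ j ∈ Finset.Ico M L, (S.cardR j : ℝ) / (S.normb j : ℝ) < δ/2 := by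
      intro L
      refine hs _ ?_
      rw [Finset.disjoint_left]
      intro j hj hjs
      have h1 : j ≤ s.sup id := Finset.le_sup (f := id) hjs
      have h2 : M ≤ j := (Finset.mem_Ico.mp hj).1
      omega
    -- the finite group of tuples of residues mod `b j`, `j < M`
    haveI : ∀ j : Fin M, Finite ((OK K) ⧸ S.b ↑j) := fun j => S.finQuot ↑j
    letI : Fintype (∀ j : Fin M, (OK K) ⧸ S.b ↑j) := Fintype.ofFinite _
    set kG := Fintype.card (∀ j : Fin M, (OK K) ⧸ S.b ↑j) with hkG
    have hkG0 : 0 < kG := Fintype.card_pos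
    set ε : ℝ := (δ/2) / kG with hεdef
    have hε0 : 0 < ε := by positivity
    -- representatives of the tuples of residues
    set xc : (∀ j : Fin M, (OK K) ⧸ S.b ↑j) → ℕ → OK K := fun c j =>
      if h : j < M then (Ideal.Quotient.mk_surjective (c ⟨j, h⟩)).choose else 0 with hxc
    have hxcspec : ∀ (c : ∀ j : Fin M, (OK K) ⧸ S.b ↑j) (j : ℕ) (h : j < M),
        Ideal.Quotient.mk (S.b j) (xc c j) = c ⟨j, h⟩ := by
      intro c j h
      rw [hxc]
      simp only [dif_pos h]
      exact (Ideal.Quotient.mk_surjective (c ⟨j, h⟩)).choose_spec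
    -- the translated sieves and their weak light tails
    set Rc : (∀ j : Fin M, (OK K) ⧸ S.b ↑j) → ℕ → Set (OK K) := fun c i =>
      if i ∈ Finset.range M then (xc c i + ·) '' S.RSet i else S.RSet i with hRc
    have hwlt : ∀ c, WeakLightTailsFam I (Rc c) := fun c =>
      (htrans (Finset.range M) (xc c)).2
    have hev : ∀ᶠ L in atTop, (M ≤ L ∧ ∀ c,
        upperDensity I (unionGe (Rc c) L \ unionLt (Rc c) L) < ε) := by
      refine (eventually_ge_atTop M).and (eventually_all.2 fun c => ?_)
      exact (hwlt c).eventually_lt_const hε0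
    obtain ⟨L₀, hL₀⟩ := eventually_atTop.mp hev
    refine ⟨L₀, fun L hL => ?_⟩
    obtain ⟨hML, hcL⟩ := hL₀ L hL
    -- the key covering of the tail union
    have hincl : unionGe S.RSet L ⊆
        (⋃ c ∈ (Finset.univ : Finset (∀ j : Fin M, (OK K) ⧸ S.b ↑j)),
          (unionGe (Rc c) L \ unionLt (Rc c) L)) ∪
        (⋃ j ∈ Finset.Ico M L, S.RSet j) := by
      intro y hy
      by_cases hcase : ∃ j ∈ Finset.Ico M L, y ∈ S.RSet j
      · obtain ⟨j, hj1, hj2⟩ := hcase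
        exact Or.inr (Set.mem_biUnion hj1 hj2)
      · push_neg at hcase
        have hwex : ∀ j : Fin M, ∃ w : (OK K) ⧸ S.b ↑j,
            w ∉ (Ideal.Quotient.mk (S.b ↑j)) '' (S.RSet ↑j) := fun j =>
          (Set.ne_univ_iff_exists_notMem _).mp (S.image_RSet_ne_univ ↑j)
        choose w hwspec using hwex
        set c : ∀ j : Fin M, (OK K) ⧸ S.b ↑j :=
          fun j => Ideal.Quotient.mk (S.b ↑j) y - w j with hcd
        refine Or.inl (Set.mem_biUnion (Finset.mem_univ c) ⟨?_, ?_⟩)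
        · -- `y` belongs to the tail of the translated sieve
          obtain ⟨i, hiL, hiy⟩ : ∃ i, L ≤ i ∧ y ∈ S.RSet i := by
            simpa [unionGe, Set.mem_iUnion] using hy
          have hRci : Rc c i = S.RSet i := by
            rw [hRc]
            simp only [Finset.mem_range]
            rw [if_neg (by omega)]
          simp only [unionGe, Set.mem_iUnion]
          exact ⟨i, hiL, hRci ▸ hiy⟩
        · -- but not to the head
          intro hmem
          obtain ⟨j, hjL, hjy⟩ : ∃ j, j < L ∧ y ∈ Rc c j := by
            simpa [unionLt, Set.mem_iUnion] using hmem
          by_cases hjM : j < M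
          · rw [hRc] at hjy
            simp only [Finset.mem_range] at hjy
            rw [if_pos hjM] at hjy
            obtain ⟨r, hr, hry'⟩ := hjy
            have hry : xc c j + r = y := hry'
            have hmkr : Ideal.Quotient.mk (S.b j) r ∈
                (Ideal.Quotient.mk (S.b j)) '' (S.RSet j) := Set.mem_image_of_mem _ hr
            have heq : Ideal.Quotient.mk (S.b j) r = w ⟨j, hjM⟩ := by
              have h1 : Ideal.Quotient.mk (S.b j) y =
                  Ideal.Quotient.mk (S.b j) (xc c j) + Ideal.Quotient.mk (S.b j) r := by
                rw [← map_add, hry]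
              rw [hxcspec c j hjM] at h1
              have h2 : c ⟨j, hjM⟩ = Ideal.Quotient.mk (S.b j) y - w ⟨j, hjM⟩ := rfl
              rw [h2] at h1
              linear_combination -h1
            rw [heq] at hmkr
            exact hwspec ⟨j, hjM⟩ hmkr
          · rw [hRc] at hjy
            simp only [Finset.mem_range] at hjy
            rw [if_neg hjM] at hjy
            exact hcase j (Finset.mem_Ico.mpr ⟨le_of_not_gt hjM, hjL⟩) hjy
    -- assembling the density bound
    have hb1 : upperDensity I (unionGe S.RSet L) ≤
        upperDensity I (⋃ c ∈ (Finset.univ : Finset (∀ j : Fin M, (OK K) ⧸ S.b ↑j)),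
          (unionGe (Rc c) L \ unionLt (Rc c) L)) +
        upperDensity I (⋃ j ∈ Finset.Ico M L, S.RSet j) :=
      (upperDensity_mono hI hincl).trans (upperDensity_union_le hI _ _)
    have hb2 : upperDensity I (⋃ c ∈ (Finset.univ : Finset (∀ j : Fin M, (OK K) ⧸ S.b ↑j)),
        (unionGe (Rc c) L \ unionLt (Rc c) L)) ≤ δ/2 := by
      refine (upperDensity_biUnion_le hI _ _).trans ?_
      calc ∑ c ∈ (Finset.univ : Finset (∀ j : Fin M, (OK K) ⧸ S.b ↑j)),
            upperDensity I (unionGe (Rc c) L \ unionLt (Rc c) L)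
          ≤ ∑ _c ∈ (Finset.univ : Finset (∀ j : Fin M, (OK K) ⧸ S.b ↑j)), ε :=
            Finset.sum_le_sum fun c _ => (hcL c).le
        _ = kG * ε := by rw [Finset.sum_const, Finset.card_univ, nsmul_eq_mul, hkG]
        _ = δ/2 := by
            rw [hεdef]
            field_simp
    have hb3 : upperDensity I (⋃ j ∈ Finset.Ico M L, S.RSet j) ≤ δ/2 := by
      refine (upperDensity_biUnion_le hI _ _).trans ?_
      refine le_of_lt (lt_of_le_of_lt ?_ (htail L))
      refine Finset.sum_le_sum fun j _ => ?_
      have h := upperDensity_preimage_le hI (S.b j) (S.finQuot j)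
        ((Ideal.Quotient.mk (S.b j)) '' (S.RSet j))
      rw [← S.RSet_eq_preimage j] at h
      exact h
    calc upperDensity I (unionGe S.RSet L) ≤ _ + _ := hb1
      _ ≤ δ/2 + δ/2 := add_le_add hb2 hb3
      _ = δ := by ring
  rw [StrongLightTailsFam, Metric.tendsto_atTop]
  intro ε hε
  obtain ⟨L₀, hL₀⟩ := key (ε/2) (by linarith)
  refine ⟨L₀, fun L hL => ?_⟩
  rw [Real.dist_eq, sub_zero, abs_of_nonneg (upperDensity_nonneg hI _)]
  exact lt_of_le_of_lt (hL₀ L hL) (by linarith)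

end ErdosSieve
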